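/- The direct sum code C₁ ⊕ C₂ ⊕ ... ⊕ C_t is minimum stopping if and only if each C_i is minimum stopping. -/

import Mathlib

open Finset

variable {ι : Type*}

/-- Support of a binary word. -/
def supp [Fintype ι] (x : ι → ZMod 2) : Finset ι :=
  Finset.univ.filter (fun j => x j ≠ 0)

/-- Hamming weight of a binary word. -/
def wt [Fintype ι] (x : ι → ZMod 2) : ℕ := (supp x).card

/-- `S` is a stopping set for the matrix `H` if no row of the column-submatrix `H_S`
has weight exactly one. -/
def IsStoppingSet {ρ : Type*} (H : Matrix ρ ι (ZMod 2)) (S : Finset ι) : Prop :=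
  ∀ i : ρ, (S.filter (fun j => H i j = 1)).card ≠ 1

/-- The dual code of a binary linear code. -/
def dualCode [Fintype ι] (C : Submodule (ZMod 2) (ι → ZMod 2)) :
    Submodule (ZMod 2) (ι → ZMod 2) where
  carrier := {y | ∀ x ∈ C, ∑ j, y j * x j = 0}
  add_mem' := by
    intro a b ha hb x hx
    simp only [Set.mem_setOf_eq] at *
    simp [Pi.add_apply, add_mul, Finset.sum_add_distrib, ha x hx, hb x hx]
  zero_mem' := by intro x hx; simp
  smul_mem' := by
    intro c a ha x hx
    simp only [Set.mem_setOf_eq] at *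
    simp [Pi.smul_apply, smul_eq_mul, mul_assoc, ← Finset.mul_sum, ha x hx]

/-- The complete parity-check matrix of `C`: rows indexed by all dual codewords. -/
def Hstar [Fintype ι] (C : Submodule (ZMod 2) (ι → ZMod 2)) :
    Matrix (dualCode C) ι (ZMod 2) := fun y j => (y : ι → ZMod 2) j

/-- A code is minimum stopping if every stopping set of its complete parity-check
matrix is the support of a codeword. -/
def MinStopping [Fintype ι] (C : Submodule (ZMod 2) (ι → ZMod 2)) : Prop :=
  ∀ S : Finset ι, IsStoppingSet (Hstar C) S → ∃ c ∈ C, supp c = S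

/-- `H` is a parity-check matrix for `C` : the words checked by all rows of `H`
are exactly the codewords of `C`. -/
def IsPCM {ρ : Type*} [Fintype ι] (C : Submodule (ZMod 2) (ι → ZMod 2))
    (H : Matrix ρ ι (ZMod 2)) : Prop :=
  ∀ x : ι → ZMod 2, x ∈ C ↔ ∀ i : ρ, ∑ j, H i j * x j = 0

/-- The direct sum (juxtaposition) of binary linear codes. -/
def dirSum {t : ℕ} {m : Fin t → ℕ}
    (C : ∀ i, Submodule (ZMod 2) (Fin (m i) → ZMod 2)) :
    Submodule (ZMod 2) ((Σ i, Fin (m i)) → ZMod 2) where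
  carrier := {x | ∀ i, (fun j => x ⟨i, j⟩) ∈ C i}
  add_mem' := fun ha hb i => (C i).add_mem (ha i) (hb i)
  zero_mem' := fun i => (C i).zero_mem
  smul_mem' := fun c _ hx i => (C i).smul_mem c (hx i)

section Aux

variable {t : ℕ} {m : Fin t → ℕ}

/-- Restriction of a word on the disjoint union to the `i`-th block. -/
def res (i : Fin t) (y : (Σ i, Fin (m i)) → ZMod 2) : Fin (m i) → ZMod 2 :=
  fun j => y ⟨i, j⟩

/-- Embedding of a word on the `i`-th block into the disjoint union (zero elsewhere). -/
def emb (i : Fin t) (x : Fin (m i) → ZMod 2) : (Σ i, Fin (m i)) → ZMod 2 :=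
  fun p => if h : p.1 = i then x (h ▸ p.2) else 0

@[simp] lemma emb_same (i : Fin t) (x : Fin (m i) → ZMod 2) (j : Fin (m i)) :
    emb i x ⟨i, j⟩ = x j := by
  simp [emb]

@[simp] lemma emb_ne (i : Fin t) (x : Fin (m i) → ZMod 2) (j : Fin t) (k : Fin (m j))
    (h : j ≠ i) : emb i x ⟨j, k⟩ = 0 := by
  simp [emb, h]

lemma res_emb_same (i : Fin t) (x : Fin (m i) → ZMod 2) : res i (emb i x) = x := by
  funext j; simp [res]

lemma res_emb_ne (i j : Fin t) (x : Fin (m i) → ZMod 2) (h : j ≠ i) :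
    res j (emb i x) = 0 := by
  funext k; simp [res, h]

lemma emb_mem_dirSum (C : ∀ i, Submodule (ZMod 2) (Fin (m i) → ZMod 2))
    (i : Fin t) (x : Fin (m i) → ZMod 2) (hx : x ∈ C i) : emb i x ∈ dirSum C := by
  intro j
  by_cases h : j = i
  · subst h
    have : (fun k => emb j x ⟨j, k⟩) = x := by funext k; simp
    rw [this]; exact hx
  · have : (fun k => emb i x ⟨j, k⟩) = 0 := by funext k; simp [h]
    rw [this]; exact (C j).zero_mem

lemma mem_dual_dirSum (C : ∀ i, Submodule (ZMod 2) (Fin (m i) → ZMod 2))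
    (y : (Σ i, Fin (m i)) → ZMod 2) :
    y ∈ dualCode (dirSum C) ↔ ∀ i, res i y ∈ dualCode (C i) := by
  constructor
  · intro hy i x hx
    have h := hy (emb i x) (emb_mem_dirSum C i x hx)
    rw [← Finset.univ_sigma_univ, Finset.sum_sigma] at h
    rw [Fintype.sum_eq_single i (fun j hj => by
      rw [Finset.sum_eq_zero]; intro k _; simp [hj])] at h
    simpa [res] using h
  · intro hy x hx
    rw [← Finset.univ_sigma_univ, Finset.sum_sigma]
    apply Finset.sum_eq_zero
    intro i _
    exact hy i (fun j => x ⟨i, j⟩) (hx i)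

/-- Restriction of a subset of the disjoint union to the `i`-th block. -/
def Sres (i : Fin t) (S : Finset (Σ i, Fin (m i))) : Finset (Fin (m i)) :=
  Finset.univ.filter (fun j => (⟨i, j⟩ : Σ i, Fin (m i)) ∈ S)

@[simp] lemma mem_Sres (i : Fin t) (S : Finset (Σ i, Fin (m i))) (j : Fin (m i)) :
    j ∈ Sres i S ↔ (⟨i, j⟩ : Σ i, Fin (m i)) ∈ S := by
  simp [Sres]

lemma card_filter_sigma (S : Finset (Σ i, Fin (m i))) (y : (Σ i, Fin (m i)) → ZMod 2) :
    (S.filter (fun p => y p = 1)).card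
      = ∑ i, ((Sres i S).filter (fun j => y ⟨i, j⟩ = 1)).card := by
  have h : S.filter (fun p => y p = 1)
      = Finset.univ.sigma (fun i => (Sres i S).filter (fun j => y ⟨i, j⟩ = 1)) := by
    ext ⟨i, j⟩
    simp [Sres]
  rw [h, Finset.card_sigma]

lemma stopping_dirSum_iff (C : ∀ i, Submodule (ZMod 2) (Fin (m i) → ZMod 2))
    (S : Finset (Σ i, Fin (m i))) :
    IsStoppingSet (Hstar (dirSum C)) S ↔ ∀ i, IsStoppingSet (Hstar (C i)) (Sres i S) := by
  constructor
  · intro hS i yi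
    intro hcard
    have hy : emb i (yi : Fin (m i) → ZMod 2) ∈ dualCode (dirSum C) := by
      rw [mem_dual_dirSum]
      intro j
      by_cases h : j = i
      · subst h; rw [res_emb_same]; exact yi.2
      · rw [res_emb_ne _ _ _ h]; exact (dualCode (C j)).zero_mem
    apply hS ⟨emb i (yi : Fin (m i) → ZMod 2), hy⟩
    show (S.filter (fun p => emb i (yi : Fin (m i) → ZMod 2) p = 1)).card = 1
    rw [card_filter_sigma]
    rw [Fintype.sum_eq_single i (fun j hj => by
      rw [Finset.card_eq_zero, Finset.filter_eq_empty_iff]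
      intro k _
      simp [hj])]
    have : ((Sres i S).filter (fun j => emb i (yi : Fin (m i) → ZMod 2) ⟨i, j⟩ = 1))
        = (Sres i S).filter (fun j => Hstar (C i) yi j = 1) := by
      apply Finset.filter_congr
      intro k _
      simp [Hstar]
    rw [this]
    exact hcard
  · intro h y hcard
    have hc : (S.filter (fun p => (y : (Σ i, Fin (m i)) → ZMod 2) p = 1)).card = 1 := hcard
    rw [card_filter_sigma] at hc
    obtain ⟨i, hi⟩ : ∃ i, ((Sres i S).filter
        (fun j => (y : (Σ i, Fin (m i)) → ZMod 2) ⟨i, j⟩ = 1)).card ≠ 0 := by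
      by_contra hall
      push_neg at hall
      rw [Finset.sum_eq_zero (fun i _ => hall i)] at hc
      exact one_ne_zero hc.symm
    have hle : ((Sres i S).filter
        (fun j => (y : (Σ i, Fin (m i)) → ZMod 2) ⟨i, j⟩ = 1)).card ≤ 1 := by
      rw [← hc]
      exact Finset.single_le_sum (f := fun k => ((Sres k S).filter
        (fun j => (y : (Σ i, Fin (m i)) → ZMod 2) ⟨k, j⟩ = 1)).card)
        (fun _ _ => Nat.zero_le _) (Finset.mem_univ i)
    have h1 : ((Sres i S).filter
        (fun j => (y : (Σ i, Fin (m i)) → ZMod 2) ⟨i, j⟩ = 1)).card = 1 :=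
      le_antisymm hle (Nat.one_le_iff_ne_zero.mpr hi)
    exact h i ⟨res i (y : (Σ i, Fin (m i)) → ZMod 2),
      (mem_dual_dirSum C _).mp y.2 i⟩ h1

end Aux

/-- The direct sum code C₁ ⊕ ... ⊕ C_t is minimum stopping if and only if each C_i is
minimum stopping. -/
theorem stmt_17 {t : ℕ} {m : Fin t → ℕ}
    (C : ∀ i, Submodule (ZMod 2) (Fin (m i) → ZMod 2)) :
    MinStopping (dirSum C) ↔ ∀ i, MinStopping (C i) := by
  constructor
  · intro h i S hS
    set Smap : Finset (Σ i, Fin (m i)) :=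
      S.map ⟨Sigma.mk i, sigma_mk_injective⟩ with hSmap
    have hstop : IsStoppingSet (Hstar (dirSum C)) Smap := by
      rw [stopping_dirSum_iff]
      intro j
      by_cases hj : j = i
      · subst hj
        have : Sres j Smap = S := by
          ext k; simp [hSmap]
        rw [this]; exact hS
      · have : Sres j Smap = ∅ := by
          ext k
          simp [hSmap]
          intro a _ hcontra
          exact fun _ => hj hcontra.symm
        rw [this]
        intro y
        simp
    obtain ⟨c, hc, hsupp⟩ := h Smap hstop
    refine ⟨res i c, hc i, ?_⟩
    ext j
    have : j ∈ supp (res i c) ↔ (⟨i, j⟩ : Σ i, Fin (m i)) ∈ supp c := by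
      simp [supp, res]
      exact ⟨fun h => (Finset.mem_filter.mp h).2, fun h => Finset.mem_filter.mpr ⟨Finset.mem_univ _, h⟩⟩
    rw [this, hsupp]
    simp [hSmap]
  · intro h S hS
    rw [stopping_dirSum_iff] at hS
    choose c hcmem hcsupp using fun i => h i (Sres i S) (hS i)
    refine ⟨fun p => c p.1 p.2, fun i => hcmem i, ?_⟩
    ext ⟨i, j⟩
    have : (⟨i, j⟩ : Σ i, Fin (m i)) ∈ supp (fun p => c p.1 p.2) ↔ j ∈ supp (c i) := by
      simp [supp]
    rw [this, hcsupp i]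
    simp
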